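/- For every real α > 1 and every real τ > 0, the improper integral ∫_0^∞ (x^{-α}/(x^{-α} + τ))² dx (equivalently ∫_0^∞ 1/(1 + τ x^{α})² dx) converges and equals (π(α − 1)/(α² sin(π/α))) · τ^{-1/α}. -/

import Mathlib

open MeasureTheory Real Set

section facts
variable (τ : ℝ)

-- substitution 1: t ↦ t/(1-t) from Ioo 0 1 onto Ioi 0
lemma f1_deriv : ∀ t ∈ Set.Ioo (0:ℝ) 1,
    HasDerivWithinAt (fun t : ℝ => t / (1-t)) (((1-t)^2)⁻¹) (Set.Ioo 0 1) t := by
  intro t ht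
  have h1 : (1:ℝ) - t ≠ 0 := sub_ne_zero.mpr (by linarith [ht.2])
  have := (hasDerivAt_id t).div ((hasDerivAt_id t).const_sub 1) h1
  exact (this.congr_deriv (by simp only [id]; ring)).hasDerivWithinAt

lemma f1_inj : Set.InjOn (fun t : ℝ => t / (1-t)) (Set.Ioo 0 1) := by
  intro s hs t ht h
  have hs1 : (1:ℝ) - s ≠ 0 := by have := hs.2; intro h'; linarith [hs.2, sub_eq_zero.mp h']
  have ht1 : (1:ℝ) - t ≠ 0 := by intro h'; linarith [ht.2, sub_eq_zero.mp h']
  field_simp at h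
  linarith

lemma f1_img : (fun t : ℝ => t / (1-t)) '' (Set.Ioo 0 1) = Set.Ioi 0 := by
  ext v
  constructor
  · rintro ⟨t, ht, rfl⟩
    have : (0:ℝ) < 1 - t := by linarith [ht.2]
    exact div_pos ht.1 this
  · intro hv
    refine ⟨v / (1+v), ⟨?_, ?_⟩, ?_⟩
    · exact div_pos hv (by linarith [Set.mem_Ioi.mp hv])
    · rw [div_lt_one (by linarith [Set.mem_Ioi.mp hv])]; linarith [Set.mem_Ioi.mp hv]
    · have h1 : (1:ℝ) + v ≠ 0 := by have := Set.mem_Ioi.mp hv; positivity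
      field_simp
      ring

end facts

section facts2

lemma f2_deriv {τ a : ℝ} (hτ : 0 < τ) : ∀ v ∈ Set.Ioi (0:ℝ),
    HasDerivWithinAt (fun v : ℝ => (v/τ) ^ a) (a / τ * (v/τ) ^ (a-1)) (Set.Ioi 0) v := by
  intro v hv
  have hv0 : (0:ℝ) < v := hv
  have h := (Real.hasDerivAt_rpow_const (x := v/τ) (p := a)
    (Or.inl (by positivity))).comp v ((hasDerivAt_id v).div_const τ)
  exact (h.congr_deriv (by ring)).hasDerivWithinAt

lemma f2_inj {τ a : ℝ} (hτ : 0 < τ) (ha : 0 < a) :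
    Set.InjOn (fun v : ℝ => (v/τ) ^ a) (Set.Ioi 0) := by
  intro s hs t ht h
  have hs0 : (0:ℝ) < s := hs
  have ht0 : (0:ℝ) < t := ht
  simp only at h
  have h2 : ((s/τ) ^ a) ^ a⁻¹ = ((t/τ) ^ a) ^ a⁻¹ := by rw [h]
  rw [← Real.rpow_mul (by positivity), ← Real.rpow_mul (by positivity),
    mul_inv_cancel₀ ha.ne', Real.rpow_one, Real.rpow_one] at h2
  field_simp at h2
  exact h2

lemma f2_img {τ a : ℝ} (hτ : 0 < τ) (ha : 0 < a) :
    (fun v : ℝ => (v/τ) ^ a) '' (Set.Ioi 0) = Set.Ioi 0 := by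
  ext x
  constructor
  · rintro ⟨v, hv, rfl⟩
    have : (0:ℝ) < v := hv
    exact Real.rpow_pos_of_pos (by positivity) a
  · intro hx
    have hx0 : (0:ℝ) < x := hx
    refine ⟨τ * x ^ a⁻¹, Set.mem_Ioi.mpr (by positivity), ?_⟩
    simp only
    rw [mul_div_cancel_left₀ _ hτ.ne', ← Real.rpow_mul hx0.le,
      inv_mul_cancel₀ ha.ne', Real.rpow_one]

end facts2

lemma ptwise2 {τ α : ℝ} (hτ : 0 < τ) (hα : 1 < α) : ∀ v ∈ Set.Ioi (0:ℝ),
    |α⁻¹ / τ * (v/τ) ^ (α⁻¹-1)| •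
      ((((v/τ) ^ α⁻¹) ^ (-α) / (((v/τ) ^ α⁻¹) ^ (-α) + τ)) ^ 2)
    = α⁻¹ / τ * (v/τ) ^ (α⁻¹-1) * ((1+v) ^ 2)⁻¹ := by
  intro v hv
  have hv0 : (0:ℝ) < v := hv
  have hα0 : (0:ℝ) < α := by linarith
  have hw : ((v/τ) ^ α⁻¹ : ℝ) ^ (-α) = τ / v := by
    rw [← Real.rpow_mul (by positivity : (0:ℝ) ≤ v/τ)]
    have : α⁻¹ * (-α) = -1 := by field_simp
    rw [this, Real.rpow_neg_one, inv_div]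
  rw [hw, smul_eq_mul, abs_of_nonneg (by positivity)]
  have hfrac : τ / v / (τ / v + τ) = (1+v)⁻¹ := by
    have h1 : (0:ℝ) < 1 + v := by linarith
    field_simp
  rw [hfrac, inv_pow]

lemma ptwise1 {τ α : ℝ} (hτ : 0 < τ) (hα : 1 < α) : ∀ t ∈ Set.Ioo (0:ℝ) 1,
    |((1-t) ^ 2)⁻¹| •
      (α⁻¹ / τ * ((t/(1-t))/τ) ^ (α⁻¹-1) * ((1 + t/(1-t)) ^ 2)⁻¹)
    = α⁻¹ * τ ^ (-α⁻¹) * (t ^ (α⁻¹-1) * (1-t) ^ (1-α⁻¹)) := by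
  intro t ht
  set a := α⁻¹ with ha_def
  have h1t : (0:ℝ) < 1 - t := by linarith [ht.2]
  have key1 : 1 + t/(1-t) = (1-t)⁻¹ := by field_simp; ring
  have habs : |((1-t) ^ 2 : ℝ)⁻¹| = ((1-t)^2)⁻¹ := abs_of_nonneg (by positivity)
  rw [smul_eq_mul, habs, key1, inv_pow, inv_inv, div_div,
    Real.div_rpow ht.1.le (by positivity), Real.mul_rpow h1t.le hτ.le]
  have e1 : ((1-t) ^ (a-1) : ℝ)⁻¹ = (1-t) ^ (1-a) := by
    rw [← Real.rpow_neg h1t.le]; ring_nf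
  have e2 : (τ ^ (a-1) : ℝ)⁻¹ * τ⁻¹ = τ ^ (-a) := by
    rw [← Real.rpow_neg hτ.le, ← Real.rpow_neg_one τ, ← Real.rpow_add hτ]; ring_nf
  rw [← e1, ← e2]
  have hne1 : ((1-t) ^ (a-1) : ℝ) ≠ 0 := (Real.rpow_pos_of_pos h1t _).ne'
  have hne2 : (τ ^ (a-1) : ℝ) ≠ 0 := (Real.rpow_pos_of_pos hτ _).ne'
  have hne3 : ((1-t) ^ 2 : ℝ) ≠ 0 := by positivity
  field_simp


lemma beta_val (a : ℝ) (h0 : 0 < a) (h1 : a < 1) :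
    ∫ t in Set.Ioo (0:ℝ) 1, t ^ (a-1) * (1-t) ^ (1-a)
      = (1-a) * (Real.pi / Real.sin (Real.pi * a)) := by
  have key : Complex.betaIntegral a (2 - a) = Complex.Gamma a * Complex.Gamma (2 - a) := by
    have := Complex.Gamma_mul_Gamma_eq_betaIntegral (s := (a:ℂ)) (t := 2 - (a:ℂ))
      (by simpa using h0) (by simp [Complex.sub_re]; linarith)
    rw [this]
    have : (a:ℂ) + (2 - a) = ((2:ℝ):ℂ) := by push_cast; ring
    rw [this, Complex.Gamma_ofReal, Real.Gamma_two]
    norm_num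
  have hre : Complex.betaIntegral a (2 - a)
      = ((∫ t in (0:ℝ)..1, t ^ (a-1) * (1-t) ^ (1-a) : ℝ) : ℂ) := by
    rw [Complex.betaIntegral, ← intervalIntegral.integral_ofReal]
    refine intervalIntegral.integral_congr fun x hx => ?_
    rw [Set.uIcc_of_le zero_le_one] at hx
    push_cast
    rw [Complex.ofReal_cpow hx.1, Complex.ofReal_cpow (by linarith [hx.2])]
    push_cast
    ring_nf
  have hGam : Complex.Gamma a * Complex.Gamma (2 - a)
      = (((1-a) * (Real.pi / Real.sin (Real.pi * a)) : ℝ) : ℂ) := by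
    have h2 : (2 - (a:ℂ)) = ((2 - a : ℝ) : ℂ) := by push_cast; ring
    rw [h2, Complex.Gamma_ofReal, Complex.Gamma_ofReal, ← Complex.ofReal_mul]
    congr 1
    have : (2 - a) = (1 - a) + 1 := by ring
    rw [this, Real.Gamma_add_one (by linarith)]
    have := Real.Gamma_mul_Gamma_one_sub a
    nlinarith [this]
  have hI : (∫ t in (0:ℝ)..1, t ^ (a-1) * (1-t) ^ (1-a) : ℝ)
      = (1-a) * (Real.pi / Real.sin (Real.pi * a)) := by
    have := hre.symm.trans (key.trans hGam)
    exact_mod_cast this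
  rw [← hI, intervalIntegral.integral_of_le zero_le_one, integral_Ioc_eq_integral_Ioo]

lemma beta_integrable (a : ℝ) (h0 : 0 < a) (h1 : a < 1) :
    IntegrableOn (fun t : ℝ => t ^ (a-1) * (1-t) ^ (1-a)) (Set.Ioo 0 1) := by
  have hbig : IntegrableOn (fun t : ℝ => t ^ (a-1)) (Set.Ioo 0 1) := by
    have := (intervalIntegral.intervalIntegrable_rpow' (a := (0:ℝ)) (b := 1)
      (r := a-1) (by linarith)).1
    exact this.mono_set Set.Ioo_subset_Ioc_self
  refine hbig.integrable.mono ?_ ?_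
  · refine ContinuousOn.aestronglyMeasurable ?_ measurableSet_Ioo
    refine ContinuousOn.mul ?_ ?_
    · exact continuousOn_id.rpow_const fun x hx => Or.inl (ne_of_gt hx.1)
    · exact (continuousOn_const.sub continuousOn_id).rpow_const
        fun x hx => Or.inr (by linarith)
  · rw [ae_restrict_iff' measurableSet_Ioo]
    filter_upwards with x hx
    have hx0 : (0:ℝ) < x := hx.1
    have hx1 : x < 1 := hx.2
    have h1' : (0:ℝ) ≤ 1 - x := by linarith
    rw [Real.norm_eq_abs, Real.norm_eq_abs, abs_of_nonneg (by positivity),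
      abs_of_nonneg (Real.rpow_nonneg hx0.le _)]
    calc x ^ (a-1) * (1-x) ^ (1-a) ≤ x ^ (a-1) * 1 := by
          gcongr
          exact Real.rpow_le_one h1' (by linarith) (by linarith)
      _ = x ^ (a-1) := mul_one _

/-- For `α > 1` and `τ > 0`, the integral
`∫_0^∞ (x^{-α}/(x^{-α} + τ))² dx` converges and equals `(π(α-1)/(α² sin(π/α))) τ^{-1/α}`. -/
theorem integral_power_law_resolvent_sq
    (α τ : ℝ) (hα : 1 < α) (hτ : 0 < τ) :
    MeasureTheory.IntegrableOn (fun x : ℝ => (x ^ (-α) / (x ^ (-α) + τ)) ^ 2) (Set.Ioi 0) ∧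
    ∫ x in Set.Ioi (0 : ℝ), (x ^ (-α) / (x ^ (-α) + τ)) ^ 2
      = (Real.pi * (α - 1) / (α ^ 2 * Real.sin (Real.pi / α))) * τ ^ (-1 / α) := by
  have hα0 : (0:ℝ) < α := by linarith
  have ha0 : (0:ℝ) < α⁻¹ := by positivity
  have ha1 : α⁻¹ < 1 := by
    rw [inv_lt_one_iff₀]; right; exact hα
  set g : ℝ → ℝ := fun x => (x ^ (-α) / (x ^ (-α) + τ)) ^ 2 with hg_def
  set g₂ : ℝ → ℝ := fun v => α⁻¹ / τ * (v/τ) ^ (α⁻¹-1) * ((1+v) ^ 2)⁻¹ with hg2_def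
  have hbi := beta_integrable α⁻¹ ha0 ha1
  -- integrability of the t-side integrand matching substitution 1
  have hbi' : IntegrableOn
      (fun t : ℝ => |((1-t) ^ 2)⁻¹| • g₂ (t/(1-t))) (Set.Ioo 0 1) := by
    have hconst : IntegrableOn
        (fun t : ℝ => α⁻¹ * τ ^ (-α⁻¹) * (t ^ (α⁻¹-1) * (1-t) ^ (1-α⁻¹)))
        (Set.Ioo 0 1) := hbi.const_mul _
    exact hconst.congr_fun (fun t ht => (ptwise1 hτ hα t ht).symm) measurableSet_Ioo
  have hi2 : IntegrableOn g₂ (Set.Ioi 0) := by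
    rw [← f1_img]
    exact (integrableOn_image_iff_integrableOn_abs_deriv_smul measurableSet_Ioo
      f1_deriv f1_inj g₂).mpr hbi'
  have hi2' : IntegrableOn
      (fun v : ℝ => |α⁻¹ / τ * (v/τ) ^ (α⁻¹-1)| • g ((v/τ) ^ α⁻¹)) (Set.Ioi 0) := by
    refine hi2.congr_fun ?_ measurableSet_Ioi
    intro v hv
    exact (ptwise2 hτ hα v hv).symm
  have hgi : IntegrableOn g (Set.Ioi 0) := by
    rw [← f2_img hτ ha0]
    exact (integrableOn_image_iff_integrableOn_abs_deriv_smul measurableSet_Ioi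
      (f2_deriv hτ) (f2_inj hτ ha0) g).mpr hi2'
  refine ⟨hgi, ?_⟩
  calc ∫ x in Set.Ioi (0:ℝ), g x
      = ∫ x in (fun v : ℝ => (v/τ) ^ α⁻¹) '' Set.Ioi 0, g x := by
        rw [f2_img hτ ha0]
    _ = ∫ v in Set.Ioi (0:ℝ), |α⁻¹ / τ * (v/τ) ^ (α⁻¹-1)| • g ((v/τ) ^ α⁻¹) :=
        integral_image_eq_integral_abs_deriv_smul measurableSet_Ioi
          (f2_deriv hτ) (f2_inj hτ ha0) g
    _ = ∫ v in Set.Ioi (0:ℝ), g₂ v :=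
        setIntegral_congr_fun measurableSet_Ioi (ptwise2 hτ hα)
    _ = ∫ v in (fun t : ℝ => t / (1-t)) '' Set.Ioo 0 1, g₂ v := by rw [f1_img]
    _ = ∫ t in Set.Ioo (0:ℝ) 1, |((1-t) ^ 2)⁻¹| • g₂ (t/(1-t)) :=
        integral_image_eq_integral_abs_deriv_smul measurableSet_Ioo
          f1_deriv f1_inj g₂
    _ = ∫ t in Set.Ioo (0:ℝ) 1,
          α⁻¹ * τ ^ (-α⁻¹) * (t ^ (α⁻¹-1) * (1-t) ^ (1-α⁻¹)) :=
        setIntegral_congr_fun measurableSet_Ioo (ptwise1 hτ hα)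
    _ = α⁻¹ * τ ^ (-α⁻¹) * ∫ t in Set.Ioo (0:ℝ) 1, t ^ (α⁻¹-1) * (1-t) ^ (1-α⁻¹) :=
        integral_const_mul _ _
    _ = α⁻¹ * τ ^ (-α⁻¹) * ((1-α⁻¹) * (Real.pi / Real.sin (Real.pi * α⁻¹))) := by
        rw [beta_val α⁻¹ ha0 ha1]
    _ = (Real.pi * (α - 1) / (α ^ 2 * Real.sin (Real.pi / α))) * τ ^ (-1 / α) := by
        have hsin : Real.sin (Real.pi / α) ≠ 0 := by
          refine (Real.sin_pos_of_pos_of_lt_pi ?_ ?_).ne'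
          · positivity
          · rw [div_lt_iff₀ hα0]
            nlinarith [Real.pi_pos]
        have h1 : Real.pi * α⁻¹ = Real.pi / α := by rw [div_eq_mul_inv]
        have h2 : (-α⁻¹ : ℝ) = -1 / α := by field_simp
        rw [h1, h2]
        field_simp
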